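/- Let f : {0,1}^{2n} → R be any function into a (possibly non-commutative) ring R. Let k, k' range uniformly and independently over {0,1}^ℓ, u uniformly over {0,1}^λ with λ = max{ℓ, 2n−ℓ}, and v uniformly over {0,1}^{2n−ℓ}. With g = (u·k+v)_lsb and g' = (u·k'+v)_lsb (GF(2^λ) arithmetic, lsb = last 2n−ℓ bits), it holds that E_{k,k',u,v}[f(k∥g)·f(k'∥g')] = 2^{-ℓ} E_β[f(β)·f(β)] + E_{β,β'}[f(β)·f(β')] − 2^{-ℓ} E_{k,g,g'}[f(k∥g)·f(k∥g')], where β, β' are independent uniform on {0,1}^{2n} and g, g' independent uniform on {0,1}^{2n−ℓ}. -/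

import Mathlib

section aux
variable {l m lam : ℕ} {F : Type*} [Field F] [Fintype F] [DecidableEq F]
  {R : Type*} [Ring R]

omit [DecidableEq F] in
lemma sum_append_aux (G : (Fin (l + m) → ZMod 2) → R) :
    ∑ β : Fin (l + m) → ZMod 2, G β
      = ∑ k : Fin l → ZMod 2, ∑ g : Fin m → ZMod 2, G (Fin.append k g) := by
  rw [← Equiv.sum_comp (Fin.appendEquiv l m) G, Fintype.sum_prod_type]
  rfl

omit [DecidableEq F] in
lemma fiber_card_aux (hcard : Fintype.card F = 2 ^ lam) (hm : m ≤ lam)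
    (lsb : F →+ (Fin m → ZMod 2)) (hlsb : Function.Surjective lsb)
    (d : Fin m → ZMod 2) :
    (Finset.univ.filter (fun w : F => lsb w = d)).card = 2 ^ (lam - m) := by
  have hconst : ∀ d' : Fin m → ZMod 2,
      (Finset.univ.filter (fun w : F => lsb w = d')).card
        = (Finset.univ.filter (fun w : F => lsb w = 0)).card := by
    intro d'
    obtain ⟨w0, hw0⟩ := hlsb d'
    apply Finset.card_bij (fun w _ => w - w0)
    · intro a ha
      simp only [Finset.mem_filter, Finset.mem_univ, true_and] at ha ⊢
      simp [map_sub, ha, hw0]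
    · intro a ha b hb h
      have h2 : a - w0 + w0 = b - w0 + w0 := by rw [h]
      simpa using h2
    · intro b hb
      refine ⟨b + w0, ?_, by ring⟩
      simp only [Finset.mem_filter, Finset.mem_univ, true_and] at hb ⊢
      simp [map_add, hb, hw0]
  have htot : ∑ d' : Fin m → ZMod 2,
      (Finset.univ.filter (fun w : F => lsb w = d')).card = Fintype.card F := by
    rw [← Finset.card_univ (α := F),
      Finset.card_eq_sum_card_fiberwise (f := fun w : F => lsb w)
      (t := Finset.univ) (fun x _ => Finset.mem_univ _)]
  have hcard2 : Fintype.card (Fin m → ZMod 2) = 2 ^ m := by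
    simp [Fintype.card_fun]
  rw [Finset.sum_congr rfl (fun d' _ => hconst d'), Finset.sum_const,
    Finset.card_univ, smul_eq_mul, hcard2, hcard] at htot
  have hsplit : (2:ℕ) ^ lam = 2 ^ m * 2 ^ (lam - m) := by
    rw [← pow_add]; congr 1; omega
  rw [hconst d]
  have h2 : (0:ℕ) < 2 ^ m := by positivity
  exact Nat.eq_of_mul_eq_mul_left h2 (by rw [htot, hsplit])

omit [DecidableEq F] in
lemma sum_lsb_aux (hcard : Fintype.card F = 2 ^ lam) (hm : m ≤ lam)
    (lsb : F →+ (Fin m → ZMod 2)) (hlsb : Function.Surjective lsb)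
    (G : (Fin m → ZMod 2) → R) :
    ∑ w : F, G (lsb w) = 2 ^ (lam - m) • ∑ d : Fin m → ZMod 2, G d := by
  classical
  rw [← Finset.sum_fiberwise_of_maps_to (g := fun w : F => lsb w)
      (t := Finset.univ) (fun x _ => Finset.mem_univ _) (fun w => G (lsb w)),
    Finset.smul_sum]
  refine Finset.sum_congr rfl fun d _ => ?_
  have : ∀ w ∈ Finset.univ.filter (fun w : F => lsb w = d), G (lsb w) = G d := by
    intro w hw; simp only [Finset.mem_filter] at hw; rw [hw.2]
  rw [Finset.sum_congr rfl this, Finset.sum_const, fiber_card_aux hcard hm lsb hlsb d]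

end aux


/-- Lemma 7 of the paper: the averaging identity for an arbitrary
(possibly non-commutative) ring-valued function `f` on `{0,1}^{2n}`.  Here
`2n = ℓ + m` with `m = 2n - ℓ`, `λ = max{ℓ, m}`, `u` ranges over `F = GF(2^λ)`,
`g = (u·k + v)_lsb = (u·inj k)_lsb + v`, and `∥` is `Fin.append`.  The identity
`E_{k,k',u,v}[f(k∥g)·f(k'∥g')] = 2^{-ℓ}E_β[f(β)f(β)] + E_{β,β'}[f(β)f(β')]
  - 2^{-ℓ}E_{k,g,g'}[f(k∥g)f(k∥g')]`
is stated in the equivalent integer-scaled form (multiplied by `2^{2ℓ+λ+m}`),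
which makes sense over any ring. -/
theorem stmt_6 {n l m lam : ℕ} (hn : l + m = 2 * n) (hlam : lam = max l m)
    {F : Type*} [Field F] [Fintype F] [DecidableEq F]
    (hcard : Fintype.card F = 2 ^ lam)
    (lsb : F →+ (Fin m → ZMod 2)) (hlsb : Function.Surjective lsb)
    (inj : (Fin l → ZMod 2) →+ F) (hinj : Function.Injective inj)
    {R : Type*} [Ring R] (f : (Fin (l + m) → ZMod 2) → R) :
    ∑ k : Fin l → ZMod 2, ∑ k' : Fin l → ZMod 2, ∑ u : F, ∑ v : Fin m → ZMod 2,
        f (Fin.append k (lsb (u * inj k) + v)) * f (Fin.append k' (lsb (u * inj k') + v))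
    = 2 ^ lam • (∑ β : Fin (l + m) → ZMod 2, f β * f β)
      + 2 ^ (lam - m) •
          (∑ β : Fin (l + m) → ZMod 2, ∑ β' : Fin (l + m) → ZMod 2, f β * f β')
      - 2 ^ (lam - m) •
          (∑ k : Fin l → ZMod 2, ∑ g : Fin m → ZMod 2, ∑ g' : Fin m → ZMod 2,
            f (Fin.append k g) * f (Fin.append k g')) := by
  classical
  have hm : m ≤ lam := hlam ▸ le_max_right l m
  set Φ : (Fin l → ZMod 2) → (Fin l → ZMod 2) → (Fin m → ZMod 2) → R :=
    fun k k' d => ∑ g : Fin m → ZMod 2, f (Fin.append k g) * f (Fin.append k' (d + g)) with hΦ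
  set T : (Fin l → ZMod 2) → (Fin l → ZMod 2) → R :=
    fun k k' => ∑ g : Fin m → ZMod 2, ∑ g' : Fin m → ZMod 2,
      f (Fin.append k g) * f (Fin.append k' g') with hT
  set D : (Fin l → ZMod 2) → R :=
    fun k => ∑ g : Fin m → ZMod 2, f (Fin.append k g) * f (Fin.append k g) with hD
  -- step 1: reindex v
  have key : ∀ k k' : Fin l → ZMod 2,
      (∑ u : F, ∑ v : Fin m → ZMod 2,
        f (Fin.append k (lsb (u * inj k) + v)) * f (Fin.append k' (lsb (u * inj k') + v)))
      = ∑ u : F, Φ k k' (lsb (u * (inj k' - inj k))) := by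
    intro k k'
    refine Finset.sum_congr rfl fun u _ => ?_
    have := Equiv.sum_comp (Equiv.addLeft (lsb (u * inj k)))
      (fun g => f (Fin.append k g) * f (Fin.append k' (lsb (u * (inj k' - inj k)) + g)))
    simp only [hΦ]
    rw [← this]
    refine Finset.sum_congr rfl fun v _ => ?_
    have hdc : lsb (u * (inj k' - inj k)) + (lsb (u * inj k) + v) = lsb (u * inj k') + v := by
      rw [← add_assoc, ← map_add]
      congr 2
      ring
    simp only [Equiv.coe_addLeft]
    rw [hdc]
  -- diagonal
  have keydiag : ∀ k : Fin l → ZMod 2,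
      ∑ u : F, Φ k k (lsb (u * (inj k - inj k))) = 2 ^ lam • D k := by
    intro k
    simp only [sub_self, mul_zero, map_zero]
    rw [Finset.sum_const, Finset.card_univ, hcard]
    congr 1
    simp [hΦ, hD]
  -- off-diagonal
  have keyoff : ∀ k k' : Fin l → ZMod 2, k ≠ k' →
      ∑ u : F, Φ k k' (lsb (u * (inj k' - inj k))) = 2 ^ (lam - m) • T k k' := by
    intro k k' hkk
    have hc : inj k' - inj k ≠ 0 := sub_ne_zero.mpr (fun h => hkk (hinj h).symm)
    have e1 := Equiv.sum_comp (Equiv.mulRight₀ (inj k' - inj k) hc)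
      (fun w => Φ k k' (lsb w))
    simp only [Equiv.mulRight₀_apply] at e1
    rw [e1, sum_lsb_aux hcard hm lsb hlsb]
    congr 1
    rw [hT]
    rw [Finset.sum_comm]
    refine Finset.sum_congr rfl fun g _ => ?_
    exact Equiv.sum_comp (Equiv.addRight g) (fun g' => f (Fin.append k g) * f (Fin.append k' g'))
  -- assemble
  calc
    ∑ k : Fin l → ZMod 2, ∑ k' : Fin l → ZMod 2, ∑ u : F, ∑ v : Fin m → ZMod 2,
        f (Fin.append k (lsb (u * inj k) + v)) * f (Fin.append k' (lsb (u * inj k') + v))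
      = ∑ k : Fin l → ZMod 2,
          (2 ^ lam • D k + (2 ^ (lam - m) • ∑ k', T k k') - 2 ^ (lam - m) • T k k) := by
        refine Finset.sum_congr rfl fun k _ => ?_
        rw [Finset.sum_congr rfl fun k' _ => key k k']
        rw [← Finset.add_sum_erase _ _ (Finset.mem_univ k), keydiag k]
        have : ∑ k' ∈ Finset.univ.erase k, (∑ u : F, Φ k k' (lsb (u * (inj k' - inj k))))
            = ∑ k' ∈ Finset.univ.erase k, 2 ^ (lam - m) • T k k' := by
          refine Finset.sum_congr rfl fun k' hk' => ?_
          exact keyoff k k' (Ne.symm (Finset.ne_of_mem_erase hk'))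
        rw [this, ← Finset.smul_sum, Finset.sum_erase_eq_sub (Finset.mem_univ k),
          smul_sub]
        abel
    _ = 2 ^ lam • (∑ k, D k) + 2 ^ (lam - m) • (∑ k, ∑ k', T k k')
          - 2 ^ (lam - m) • (∑ k, T k k) := by
        rw [Finset.sum_sub_distrib, Finset.sum_add_distrib, ← Finset.smul_sum,
          ← Finset.smul_sum, ← Finset.smul_sum]
    _ = 2 ^ lam • (∑ β : Fin (l + m) → ZMod 2, f β * f β)
          + 2 ^ (lam - m) •
              (∑ β : Fin (l + m) → ZMod 2, ∑ β' : Fin (l + m) → ZMod 2, f β * f β')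
          - 2 ^ (lam - m) •
              (∑ k : Fin l → ZMod 2, ∑ g : Fin m → ZMod 2, ∑ g' : Fin m → ZMod 2,
                f (Fin.append k g) * f (Fin.append k g')) := by
        congr 2
        · rw [sum_append_aux (G := fun β => f β * f β)]
        · rw [sum_append_aux (G := fun β => ∑ β' : Fin (l + m) → ZMod 2, f β * f β')]
          congr 1
          refine Finset.sum_congr rfl fun k _ => ?_
          rw [Finset.sum_comm]
          refine Finset.sum_congr rfl fun k' _ => ?_
          rw [sum_append_aux (G := fun β' => f (Fin.append k _) * f β')]
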